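/- Under Assumption 1 with parameter k, for all integers t, t' with t − t' ≥ k, the long autocovariance of log-wage residuals factorizes as cov(w_t, w_{t'}) = μ_t · ( μ_{t'} · cov(θ_{t'+k−1}, θ_{t'}) + cov(θ_{t'+k−1}, ε_{t'}) ). In particular, cov(w_t, w_{t'}) = μ_t · Ω_{t'}, where Ω_{t'} := μ_{t'} · cov(θ_{t'+k−1}, θ_{t'}) + cov(θ_{t'+k−1}, ε_{t'}) does not depend on t. -/

import Mathlib

open MeasureTheory ProbabilityTheory

/-- Covariance of two real-valued random variables under measure `P`. -/
noncomputable def cov {Ω : Type*} [MeasurableSpace Ω] (P : Measure Ω) (X Y : Ω → ℝ) : ℝ :=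
  ∫ ω, (X ω - ∫ a, X a ∂P) * (Y ω - ∫ a, Y a ∂P) ∂P

/-- Variance of a real-valued random variable under measure `P`. -/
noncomputable def Var {Ω : Type*} [MeasurableSpace Ω] (P : Measure Ω) (X : Ω → ℝ) : ℝ :=
  cov P X X

section helpers
variable {Ω : Type*} [MeasurableSpace Ω] (P : Measure Ω) [IsProbabilityMeasure P]

lemma integrable_kernel {X Z : Ω → ℝ} (hX : MemLp X 2 P) (hZ : MemLp Z 2 P) (a b : ℝ) :
    Integrable (fun ω => (X ω - a) * (Z ω - b)) P := by
  rw [← memLp_one_iff_integrable]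
  have hpqr : (1 : ENNReal) / 1 = 1 / 2 + 1 / 2 := by
    rw [ENNReal.div_add_div_same]
    norm_num
    rw [ENNReal.div_self (by norm_num) (by norm_num)]
  have h := ((hZ.sub (memLp_const b)).smul (hX.sub (memLp_const a))
    (p := 2) (q := 2) (r := 1))
  exact h

omit [IsProbabilityMeasure P] in
lemma cov_comm (X Y : Ω → ℝ) : cov P X Y = cov P Y X := by
  simp only [cov, mul_comm]

lemma cov_add_left {X Y Z : Ω → ℝ} (hX : MemLp X 2 P) (hY : MemLp Y 2 P) (hZ : MemLp Z 2 P) :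
    cov P (fun ω => X ω + Y ω) Z = cov P X Z + cov P Y Z := by
  have h1 : ∫ a, (X a + Y a) ∂P = (∫ a, X a ∂P) + ∫ a, Y a ∂P :=
    integral_add (hX.integrable one_le_two) (hY.integrable one_le_two)
  unfold cov
  rw [← integral_add (integrable_kernel P hX hZ _ _) (integrable_kernel P hY hZ _ _)]
  congr 1; funext ω; rw [h1]; ring

omit [IsProbabilityMeasure P] in
lemma cov_smul_left (c : ℝ) (X Z : Ω → ℝ) :
    cov P (fun ω => c * X ω) Z = c * cov P X Z := by
  have h1 : ∫ a, c * X a ∂P = c * ∫ a, X a ∂P := integral_const_mul c X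
  unfold cov
  rw [← integral_const_mul c]
  congr 1; funext ω; rw [h1]; ring

lemma cov_sub_left {X Y Z : Ω → ℝ} (hX : MemLp X 2 P) (hY : MemLp Y 2 P) (hZ : MemLp Z 2 P) :
    cov P (fun ω => X ω - Y ω) Z = cov P X Z - cov P Y Z := by
  have h1 : ∫ a, (X a - Y a) ∂P = (∫ a, X a ∂P) - ∫ a, Y a ∂P :=
    integral_sub (hX.integrable one_le_two) (hY.integrable one_le_two)
  unfold cov
  rw [← integral_sub (integrable_kernel P hX hZ _ _) (integrable_kernel P hY hZ _ _)]
  congr 1; funext ω; rw [h1]; ring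

/-- Telescoping: long covariances with `Z` are constant in the first index. -/
lemma cov_telescope (θ : ℤ → Ω → ℝ) (Z : Ω → ℝ) (hθ : ∀ t, MemLp (θ t) 2 P)
    (hZ : MemLp Z 2 P) (k : ℕ) (t' : ℤ)
    (hA : ∀ t : ℤ, (k : ℤ) ≤ t - t' → cov P (fun ω => θ t ω - θ (t - 1) ω) Z = 0) :
    ∀ n : ℕ, cov P (θ (t' + k - 1 + n)) Z = cov P (θ (t' + k - 1)) Z := by
  intro n
  induction n with
  | zero => norm_num
  | succ m ih =>
    have e1 : t' + k - 1 + ((m : ℤ) + 1) = (t' + k - 1 + m) + 1 := by ring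
    push_cast
    rw [e1]
    have key : cov P (fun ω => θ (t' + k - 1 + m + 1) ω - θ (t' + k - 1 + m) ω) Z = 0 := by
      have h := hA (t' + k - 1 + m + 1) (by omega)
      have e2 : t' + (k : ℤ) - 1 + m + 1 - 1 = t' + k - 1 + m := by ring
      rwa [e2] at h
    have hsub := cov_sub_left P (hθ (t' + k - 1 + m + 1)) (hθ (t' + k - 1 + m)) hZ
    rw [key] at hsub
    have : cov P (θ (t' + k - 1 + m + 1)) Z = cov P (θ (t' + k - 1 + m)) Z := by linarith
    rw [this]
    push_cast at ih
    exact ih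

end helpers

/-- Under Assumption 1 with parameter `k`, long autocovariances of log-wage residuals
factorize: `cov (w t) (w t') = μ t * Ω t'` where
`Ω t' = μ t' * cov (θ (t'+k-1)) (θ t') + cov (θ (t'+k-1)) (ε t')`. -/
theorem long_autocov_factorization
    {Ω : Type*} [MeasurableSpace Ω] (P : Measure Ω) [IsProbabilityMeasure P]
    (θ ε : ℤ → Ω → ℝ) (μ : ℤ → ℝ) (w : ℤ → Ω → ℝ)
    (hθ : ∀ t, MemLp (θ t) 2 P) (hε : ∀ t, MemLp (ε t) 2 P)
    (hw : ∀ t ω, w t ω = μ t * θ t ω + ε t ω)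
    (k : ℕ) (hk : 1 ≤ k)
    (A1i : ∀ t t' : ℤ, (k : ℤ) ≤ t - t' →
      cov P (fun ω => θ t ω - θ (t - 1) ω) (θ t') = 0)
    (A1ii : ∀ t t' : ℤ, (k : ℤ) ≤ t - t' →
      cov P (fun ω => θ t ω - θ (t - 1) ω) (ε t') = 0)
    (A1iii : ∀ t t' : ℤ, (k : ℤ) ≤ t - t' → cov P (ε t) (θ t') = 0)
    (A1iv : ∀ t t' : ℤ, (k : ℤ) ≤ t - t' → cov P (ε t) (ε t') = 0) :
    ∀ t t' : ℤ, (k : ℤ) ≤ t - t' →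
      cov P (w t) (w t') =
        μ t * (μ t' * cov P (θ (t' + k - 1)) (θ t') + cov P (θ (t' + k - 1)) (ε t')) := by
  intro t t' htt'
  have hwt : w t = fun ω => μ t * θ t ω + ε t ω := funext (hw t)
  have hwt' : w t' = fun ω => μ t' * θ t' ω + ε t' ω := funext (hw t')
  have hμθ : ∀ s : ℤ, MemLp (fun ω => μ s * θ s ω) 2 P := fun s => (hθ s).const_mul _
  have hW' : MemLp (w t') 2 P := by rw [hwt']; exact (hμθ t').add (hε t')
  have hZ' : MemLp (fun ω => μ t' * θ t' ω + ε t' ω) 2 P := by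
    exact (hμθ t').add (hε t')
  -- expand left argument
  rw [hwt, hwt']
  rw [cov_add_left P (hμθ t) (hε t) hZ',
    cov_smul_left P (μ t) (θ t)]
  -- expand right arguments
  rw [cov_comm P (θ t), cov_comm P (ε t)]
  rw [cov_add_left P (hμθ t') (hε t') (hθ t), cov_add_left P (hμθ t') (hε t') (hε t),
    cov_smul_left P (μ t') (θ t') (θ t), cov_smul_left P (μ t') (θ t') (ε t)]
  rw [cov_comm P (θ t') (θ t), cov_comm P (ε t') (θ t),
    cov_comm P (θ t') (ε t), cov_comm P (ε t') (ε t)]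
  rw [A1iii t t' htt', A1iv t t' htt']
  -- telescoping
  have hn : ∃ n : ℕ, t = t' + k - 1 + n := ⟨(t - (t' + k - 1)).toNat, by omega⟩
  obtain ⟨n, rfl⟩ := hn
  rw [cov_telescope P θ (θ t') hθ (hθ t') k t' (fun s hs => A1i s t' hs) n,
    cov_telescope P θ (ε t') hθ (hε t') k t' (fun s hs => A1ii s t' hs) n]
  ring
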